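/- Let (F, ≺) be an IS-family with minimum element sm(F). With M(x) = Σ_{S ∈ E_x} 2^{x − ex(S)} · |hat_x(S)|, one has M(x) ≤ 2^x · |sm(F)| for all x ≥ 0. -/

import Mathlib

/-- A family of subsets of a finite set `V` with a strict partial order. -/
structure ISFamily (V : Type*) [DecidableEq V] [Fintype V] where
  F : Finset (Finset V)
  prec : Finset V → Finset V → Prop
  prec_trans : ∀ {a b c : Finset V}, prec a b → prec b c → prec a c
  prec_irrefl : ∀ a : Finset V, ¬ prec a a

namespace ISFamily

variable {V : Type*} [DecidableEq V] [Fintype V] (Fam : ISFamily V)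

/-- The immediate predecessors of `S` in the family. -/
def Pred (S : Finset V) : Set (Finset V) :=
  {S' | S' ∈ Fam.F ∧ Fam.prec S' S ∧
    ¬ ∃ S'' ∈ Fam.F, Fam.prec S' S'' ∧ Fam.prec S'' S}

/-- `S'` covers `v` if some member of the family preceding `S'` contains `v` while
`S'` does not. -/
def Covers (S' : Finset V) (v : V) : Prop :=
  ∃ S'' ∈ Fam.F, Fam.prec S'' S' ∧ v ∈ S'' ∧ v ∉ S'

/-- The visible set of `S`: vertices belonging to some immediate predecessor of `S`
and not covered by any immediate predecessor of `S`. -/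
def Vis (S : Finset V) : Set V :=
  {v | (∃ S' ∈ Fam.Pred S, v ∈ S') ∧ ∀ S' ∈ Fam.Pred S, ¬ Fam.Covers S' v}

/-- `hat S = S \ ⋃_{S' ≺ S} S'`. -/
def hat (S : Finset V) : Set V :=
  ↑S \ ⋃ S' ∈ {S' | S' ∈ Fam.F ∧ Fam.prec S' S}, (↑S' : Set V)

/-- `W` is a witness of `v` w.r.t. `S`: a minimal element of the family with
`S ≺ W` and `v ∉ W`. -/
def IsWitness (S : Finset V) (v : V) (W : Finset V) : Prop :=
  W ∈ Fam.F ∧ Fam.prec S W ∧ v ∉ W ∧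
    ∀ W' ∈ Fam.F, Fam.prec S W' → v ∉ W' → ¬ Fam.prec W' W

/-- The axioms making `(F, ≺)` an IS-family with smallest element `sm`. -/
structure IsIS (sm : Finset V) : Prop where
  sm_mem : sm ∈ Fam.F
  SE : ∀ S ∈ Fam.F, S ≠ sm → Fam.prec sm S
  SM : ∀ S₁ ∈ Fam.F, ∀ S₂ ∈ Fam.F, Fam.prec S₁ S₂ → S₁.card < S₂.card
  SW : ∀ S ∈ Fam.F, ∀ v ∈ S, ∀ W₁ W₂ : Finset V,
    Fam.IsWitness S v W₁ → Fam.IsWitness S v W₂ → W₁ = W₂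
  TE : ∀ S₁ ∈ Fam.F, ∀ S₂ ∈ Fam.F, ∀ S₃ ∈ Fam.F,
    Fam.prec S₁ S₂ → Fam.prec S₂ S₃ → ∀ v ∈ S₁, v ∉ S₂ → v ∉ S₃
  LVS : ∀ S ∈ Fam.F, ∀ S' ∈ Fam.Pred S, S'.card ≤ (Fam.Vis S).ncard
  DVS : ∀ S ∈ Fam.F, S ≠ sm → ¬ (Fam.Vis S ⊆ ↑S)

/-- The excess of `S` relative to the smallest element `sm`. -/
def ex (sm S : Finset V) : ℕ := S.card - sm.card

/-- The members of the family of excess at most `x`. -/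
def Ex (sm : Finset V) (x : ℕ) : Finset (Finset V) :=
  Fam.F.filter (fun S => ex sm S ≤ x)

/-- The `x`-hat of `S`: elements of `hat S` not excluded by any member of `E_x`
succeeding `S`. -/
def hatx (sm : Finset V) (x : ℕ) (S : Finset V) : Set V :=
  {v ∈ Fam.hat S | ¬ ∃ S' ∈ Fam.Ex sm x, Fam.prec S S' ∧ v ∉ S'}

/-- `M(x) = Σ_{S ∈ E_x} 2^{x - ex(S)} · |hat_x(S)|`. -/
noncomputable def M (sm : Finset V) (x : ℕ) : ℕ :=
  ∑ S ∈ Fam.Ex sm x, 2 ^ (x - ex sm S) * (Fam.hatx sm x S).ncard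

end ISFamily

/-! ### Auxiliary lemmas for the main theorem -/

namespace ISMainAux

open ISFamily

variable {V : Type*} [DecidableEq V] [Fintype V]

lemma mem_hat {Fam : ISFamily V} {S : Finset V} {v : V} :
    v ∈ Fam.hat S ↔ v ∈ S ∧ ∀ T ∈ Fam.F, Fam.prec T S → v ∉ T := by
  simp only [ISFamily.hat, Set.mem_diff, Set.mem_iUnion, Set.mem_setOf_eq,
    Finset.mem_coe, exists_prop]
  constructor
  · rintro ⟨h1, h2⟩
    exact ⟨h1, fun T hT hTS hvT => h2 ⟨T, ⟨hT, hTS⟩, hvT⟩⟩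
  · rintro ⟨h1, h2⟩
    exact ⟨h1, fun ⟨T, ⟨hT, hTS⟩, hvT⟩ => h2 T hT hTS hvT⟩

lemma mem_hatx {Fam : ISFamily V} {sm : Finset V} {x : ℕ} {S : Finset V} {v : V} :
    v ∈ Fam.hatx sm x S ↔ v ∈ Fam.hat S ∧
      ¬ ∃ S' ∈ Fam.Ex sm x, Fam.prec S S' ∧ v ∉ S' := Iff.rfl

lemma mem_Ex {Fam : ISFamily V} {sm : Finset V} {x : ℕ} {S : Finset V} :
    S ∈ Fam.Ex sm x ↔ S ∈ Fam.F ∧ S.card - sm.card ≤ x := by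
  simp [ISFamily.Ex, ISFamily.ex]

lemma hat_subset {Fam : ISFamily V} {S : Finset V} : Fam.hat S ⊆ ↑S :=
  fun _ hv => (mem_hat.mp hv).1

lemma hatx_subset_hat {Fam : ISFamily V} {sm : Finset V} {x : ℕ} {S : Finset V} :
    Fam.hatx sm x S ⊆ Fam.hat S := fun _ hv => (mem_hatx.mp hv).1

lemma sm_card_le {Fam : ISFamily V} {sm : Finset V} (hIS : Fam.IsIS sm)
    {S : Finset V} (hS : S ∈ Fam.F) : sm.card ≤ S.card := by
  by_cases h : S = sm
  · subst h; exact le_rfl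
  · exact (hIS.SM sm hIS.sm_mem S hS (hIS.SE S hS h)).le

/-- Any member of `F` strictly above `T` (missing `v`) lies above a witness of `(T, v)`. -/
lemma exists_witness_le_aux {Fam : ISFamily V} {sm : Finset V} (hIS : Fam.IsIS sm) :
    ∀ n : ℕ, ∀ S ∈ Fam.F, S.card ≤ n → ∀ T ∈ Fam.F, Fam.prec T S → ∀ v, v ∉ S →
      ∃ W, Fam.IsWitness T v W ∧ (W = S ∨ Fam.prec W S) := by
  intro n
  induction n using Nat.strong_induction_on with
  | _ n IH =>
    intro S hS hn T hT hTS v hvS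
    by_cases h : ∃ W' ∈ Fam.F, Fam.prec T W' ∧ v ∉ W' ∧ Fam.prec W' S
    · obtain ⟨W', hW'F, hTW', hvW', hW'S⟩ := h
      have hcard : W'.card < S.card := hIS.SM W' hW'F S hS hW'S
      obtain ⟨W, hW, hle⟩ :=
        IH W'.card (lt_of_lt_of_le hcard hn) W' hW'F le_rfl T hT hTW' v hvW'
      refine ⟨W, hW, Or.inr ?_⟩
      rcases hle with h' | h'
      · exact h' ▸ hW'S
      · exact Fam.prec_trans h' hW'S
    · refine ⟨S, ⟨hS, hTS, hvS, fun W' h1 h2 h3 h4 => h ⟨W', h1, h2, h3, h4⟩⟩, Or.inl rfl⟩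

lemma exists_witness_le {Fam : ISFamily V} {sm : Finset V} (hIS : Fam.IsIS sm)
    {S T : Finset V} (hS : S ∈ Fam.F) (hT : T ∈ Fam.F) (hTS : Fam.prec T S)
    {v : V} (hvS : v ∉ S) :
    ∃ W, Fam.IsWitness T v W ∧ (W = S ∨ Fam.prec W S) :=
  exists_witness_le_aux hIS S.card S hS le_rfl T hT hTS v hvS

/-- Every element of a member `T` of the family lies in `hat T₀` for some `T₀ ⪯ T`. -/
lemma exists_min_container_aux {Fam : ISFamily V} {sm : Finset V} (hIS : Fam.IsIS sm) :
    ∀ n : ℕ, ∀ T ∈ Fam.F, T.card ≤ n → ∀ v ∈ T,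
      ∃ T₀ ∈ Fam.F, (T₀ = T ∨ Fam.prec T₀ T) ∧ v ∈ Fam.hat T₀ := by
  intro n
  induction n using Nat.strong_induction_on with
  | _ n IH =>
    intro T hT hn v hv
    by_cases h : ∃ P ∈ Fam.F, Fam.prec P T ∧ v ∈ P
    · obtain ⟨P, hPF, hPT, hvP⟩ := h
      have hcard : P.card < T.card := hIS.SM P hPF T hT hPT
      obtain ⟨T₀, hT₀F, hle, hhat⟩ :=
        IH P.card (lt_of_lt_of_le hcard hn) P hPF le_rfl v hvP
      refine ⟨T₀, hT₀F, Or.inr ?_, hhat⟩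
      rcases hle with h' | h'
      · exact h' ▸ hPT
      · exact Fam.prec_trans h' hPT
    · exact ⟨T, hT, Or.inl rfl,
        mem_hat.mpr ⟨hv, fun P hPF hPT hvP => h ⟨P, hPF, hPT, hvP⟩⟩⟩

lemma exists_min_container {Fam : ISFamily V} {sm : Finset V} (hIS : Fam.IsIS sm)
    {T : Finset V} (hT : T ∈ Fam.F) {v : V} (hv : v ∈ T) :
    ∃ T₀ ∈ Fam.F, (T₀ = T ∨ Fam.prec T₀ T) ∧ v ∈ Fam.hat T₀ :=
  exists_min_container_aux hIS T.card T hT le_rfl v hv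

/-- Every strict predecessor of `S` lies below an immediate predecessor of `S`. -/
lemma exists_pred_above_aux {Fam : ISFamily V} {sm : Finset V} (hIS : Fam.IsIS sm)
    {S : Finset V} (hS : S ∈ Fam.F) :
    ∀ n : ℕ, ∀ T ∈ Fam.F, Fam.prec T S → S.card - T.card ≤ n →
      ∃ P ∈ Fam.Pred S, (T = P ∨ Fam.prec T P) := by
  intro n
  induction n using Nat.strong_induction_on with
  | _ n IH =>
    intro T hT hTS hn
    by_cases h : ∃ S'' ∈ Fam.F, Fam.prec T S'' ∧ Fam.prec S'' S
    · obtain ⟨S'', hS''F, h1, h2⟩ := h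
      have c1 : T.card < S''.card := hIS.SM T hT S'' hS''F h1
      have c2 : S''.card < S.card := hIS.SM S'' hS''F S hS h2
      obtain ⟨P, hP, hle⟩ := IH (S.card - S''.card) (by omega) S'' hS''F h2 le_rfl
      refine ⟨P, hP, Or.inr ?_⟩
      rcases hle with h' | h'
      · exact h' ▸ h1
      · exact Fam.prec_trans h1 h'
    · exact ⟨T, ⟨hT, hTS, h⟩, Or.inl rfl⟩

lemma exists_pred_above {Fam : ISFamily V} {sm : Finset V} (hIS : Fam.IsIS sm)
    {S T : Finset V} (hS : S ∈ Fam.F) (hT : T ∈ Fam.F) (hTS : Fam.prec T S) :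
    ∃ P ∈ Fam.Pred S, (T = P ∨ Fam.prec T P) :=
  exists_pred_above_aux hIS hS (S.card - T.card) T hT hTS le_rfl

/-- Key lemma: a visible vertex of `S` outside `S` lies in `hatx sm x T₀` for some
predecessor `T₀` of `S` sitting below an immediate predecessor containing `v`. -/
lemma vis_key {Fam : ISFamily V} {sm : Finset V} (hIS : Fam.IsIS sm)
    {x : ℕ} {S : Finset V} (hS : S ∈ Fam.F) (hcard : S.card = sm.card + x + 1)
    {v : V} (hvis : v ∈ Fam.Vis S) (hvS : v ∉ S) :
    ∃ T₀ ∈ Fam.F, Fam.prec T₀ S ∧ v ∈ Fam.hatx sm x T₀ ∧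
      ∃ P ∈ Fam.Pred S, v ∈ P ∧ T₀.card ≤ P.card := by
  obtain ⟨⟨P', hP', hvP'⟩, huncov⟩ := hvis
  have hP'F : P' ∈ Fam.F := hP'.1
  have hP'S : Fam.prec P' S := hP'.2.1
  obtain ⟨T₀, hT₀F, hT₀le, hvhat⟩ := exists_min_container hIS hP'F hvP'
  have hT₀S : Fam.prec T₀ S := by
    rcases hT₀le with h' | h'
    · exact h' ▸ hP'S
    · exact Fam.prec_trans h' hP'S
  have hT₀P' : T₀.card ≤ P'.card := by
    rcases hT₀le with h' | h'
    · exact h' ▸ le_rfl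
    · exact (hIS.SM T₀ hT₀F P' hP'F h').le
  have hvT₀ : v ∈ T₀ := (mem_hat.mp hvhat).1
  refine ⟨T₀, hT₀F, hT₀S, mem_hatx.mpr ⟨hvhat, ?_⟩, P', hP', hvP', hT₀P'⟩
  rintro ⟨R, hR, hTR, hvR⟩
  have hRF : R ∈ Fam.F := (mem_Ex.mp hR).1
  have hRex : R.card - sm.card ≤ x := (mem_Ex.mp hR).2
  have hRsm : sm.card ≤ R.card := sm_card_le hIS hRF
  have hRcard : R.card ≤ sm.card + x := by omega
  obtain ⟨W₁, hW₁, hW₁le⟩ := exists_witness_le hIS hRF hT₀F hTR hvR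
  obtain ⟨W₂, hW₂, hW₂le⟩ := exists_witness_le hIS hS hT₀F hT₀S hvS
  have hWeq : W₁ = W₂ := hIS.SW T₀ hT₀F v hvT₀ W₁ W₂ hW₁ hW₂
  subst hWeq
  have hW₁cardR : W₁.card ≤ R.card := by
    rcases hW₁le with h' | h'
    · exact h' ▸ le_rfl
    · exact (hIS.SM W₁ hW₁.1 R hRF h').le
  have hWS : Fam.prec W₁ S := by
    rcases hW₂le with h' | h'
    · exfalso; rw [h'] at hW₁cardR; omega
    · exact h'
  obtain ⟨Q, hQ, hWQ⟩ := exists_pred_above hIS hS hW₁.1 hWS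
  have hQF : Q ∈ Fam.F := hQ.1
  have hvW₁ : v ∉ W₁ := hW₁.2.2.1
  have hT₀W₁ : Fam.prec T₀ W₁ := hW₁.2.1
  have hvQ : v ∉ Q := by
    rcases hWQ with h' | h'
    · exact h' ▸ hvW₁
    · exact hIS.TE T₀ hT₀F W₁ hW₁.1 Q hQF hT₀W₁ h' v hvT₀ hvW₁
  have hT₀Q : Fam.prec T₀ Q := by
    rcases hWQ with h' | h'
    · exact h' ▸ hT₀W₁
    · exact Fam.prec_trans hT₀W₁ h'
  exact huncov Q hQ ⟨T₀, hT₀F, hT₀Q, hvT₀, hvQ⟩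

/-- Each lost pair is excluded by exactly one member of excess `x + 1`. -/
lemma excluder_unique {Fam : ISFamily V} {sm : Finset V} (hIS : Fam.IsIS sm)
    {x : ℕ} {T : Finset V} (hT : T ∈ Fam.F) {v : V} (hv : v ∈ Fam.hatx sm x T)
    {S₁ S₂ : Finset V} (h₁ : S₁ ∈ Fam.F) (hc₁ : S₁.card = sm.card + x + 1)
    (hp₁ : Fam.prec T S₁) (hv₁ : v ∉ S₁)
    (h₂ : S₂ ∈ Fam.F) (hc₂ : S₂.card = sm.card + x + 1)
    (hp₂ : Fam.prec T S₂) (hv₂ : v ∉ S₂) : S₁ = S₂ := by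
  have hvT : v ∈ T := hat_subset (hatx_subset_hat hv)
  obtain ⟨W₁, hW₁, hW₁le⟩ := exists_witness_le hIS h₁ hT hp₁ hv₁
  obtain ⟨W₂, hW₂, hW₂le⟩ := exists_witness_le hIS h₂ hT hp₂ hv₂
  have hWeq : W₁ = W₂ := hIS.SW T hT v hvT W₁ W₂ hW₁ hW₂
  subst hWeq
  have hnot := (mem_hatx.mp hv).2
  have hWbig : ¬ (W₁.card - sm.card ≤ x) := by
    intro h
    exact hnot ⟨W₁, mem_Ex.mpr ⟨hW₁.1, h⟩, hW₁.2.1, hW₁.2.2.1⟩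
  have hWsm : sm.card ≤ W₁.card := sm_card_le hIS hW₁.1
  have hWe₁ : W₁ = S₁ := by
    rcases hW₁le with h' | h'
    · exact h'
    · exact absurd (hIS.SM W₁ hW₁.1 S₁ h₁ h') (by omega)
  have hWe₂ : W₁ = S₂ := by
    rcases hW₂le with h' | h'
    · exact h'
    · exact absurd (hIS.SM W₁ hW₁.1 S₂ h₂ h') (by omega)
  rw [← hWe₁, ← hWe₂]

end ISMainAux

namespace ISMainAux

open ISFamily

variable {V : Type*} [DecidableEq V] [Fintype V]

/-- Finset version of `hatx`. -/
noncomputable def hatxF (Fam : ISFamily V) (sm : Finset V) (x : ℕ) (S : Finset V) : Finset V :=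
  (Set.toFinite (Fam.hatx sm x S)).toFinset

lemma mem_hatxF {Fam : ISFamily V} {sm S : Finset V} {x : ℕ} {v : V} :
    v ∈ hatxF Fam sm x S ↔ v ∈ Fam.hatx sm x S := Set.Finite.mem_toFinset _

lemma ncard_hatx {Fam : ISFamily V} {sm S : Finset V} {x : ℕ} :
    (Fam.hatx sm x S).ncard = (hatxF Fam sm x S).card :=
  Set.ncard_eq_toFinset_card _ _

/-- The set of pairs lost at `T` because of `S`. -/
noncomputable def LostF (Fam : ISFamily V) (sm : Finset V) (x : ℕ) (S T : Finset V) : Finset V :=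
  (Set.toFinite {v | v ∈ Fam.hatx sm x T ∧ Fam.prec T S ∧ v ∉ S}).toFinset

lemma mem_LostF {Fam : ISFamily V} {sm S T : Finset V} {x : ℕ} {v : V} :
    v ∈ LostF Fam sm x S T ↔ v ∈ Fam.hatx sm x T ∧ Fam.prec T S ∧ v ∉ S :=
  Set.Finite.mem_toFinset _

lemma hatx_anti {Fam : ISFamily V} {sm S : Finset V} {x : ℕ} :
    Fam.hatx sm (x + 1) S ⊆ Fam.hatx sm x S := by
  intro v hv
  obtain ⟨h1, h2⟩ := mem_hatx.mp hv
  refine mem_hatx.mpr ⟨h1, ?_⟩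
  rintro ⟨S', hS', h3, h4⟩
  obtain ⟨hS'F, hS'x⟩ := mem_Ex.mp hS'
  exact h2 ⟨S', mem_Ex.mpr ⟨hS'F, by omega⟩, h3, h4⟩

set_option maxHeartbeats 1000000 in
/-- Key per-`S` inequality: the hat of a set of excess `x + 1` is bounded by the
weighted number of pairs it excludes. -/
lemma key_ineq {Fam : ISFamily V} {sm : Finset V} (hIS : Fam.IsIS sm)
    {x : ℕ} {S : Finset V} (hS : S ∈ Fam.F) (hcard : S.card = sm.card + x + 1) :
    (Fam.hat S).ncard ≤
      ∑ T ∈ Fam.Ex sm x, 2 ^ (x + 1 - ISFamily.ex sm T) * (LostF Fam sm x S T).card := by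
  classical
  have hSne : S ≠ sm := by
    intro h
    rw [h] at hcard
    omega
  have hVis := hIS.DVS S hS hSne
  set VisF : Finset V := (Set.toFinite (Fam.Vis S)).toFinset with hVisFdef
  have hmemVisF : ∀ v, v ∈ VisF ↔ v ∈ Fam.Vis S := fun v => Set.Finite.mem_toFinset _
  set B : Finset V := VisF.filter (fun v => v ∉ S) with hBdef
  have hBne : B.Nonempty := by
    rw [Set.not_subset] at hVis
    obtain ⟨v, hv1, hv2⟩ := hVis
    exact ⟨v, Finset.mem_filter.mpr ⟨(hmemVisF v).mpr hv1, hv2⟩⟩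
  have hchoice : ∀ v : V, ∃ TP : Finset V × Finset V, v ∈ B →
      TP.1 ∈ Fam.F ∧ Fam.prec TP.1 S ∧ v ∈ Fam.hatx sm x TP.1 ∧
        TP.2 ∈ Fam.Pred S ∧ v ∈ TP.2 ∧ TP.1.card ≤ TP.2.card := by
    intro v
    by_cases hv : v ∈ B
    · have hv1 : v ∈ Fam.Vis S := (hmemVisF v).mp (Finset.mem_filter.mp hv).1
      have hv2 : v ∉ S := (Finset.mem_filter.mp hv).2
      obtain ⟨T₀, hT₀F, hT₀S, hvhx, P, hP, hvP, hcP⟩ := vis_key hIS hS hcard hv1 hv2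
      exact ⟨(T₀, P), fun _ => ⟨hT₀F, hT₀S, hvhx, hP, hvP, hcP⟩⟩
    · exact ⟨(∅, ∅), fun h => absurd h hv⟩
  choose gp hgp using hchoice
  have hgEx : ∀ v ∈ B, (gp v).1 ∈ Fam.Ex sm x := by
    intro v hv
    obtain ⟨h1, h2, _, _, _, _⟩ := hgp v hv
    have hlt := hIS.SM _ h1 S hS h2
    have hsm := sm_card_le hIS h1
    exact mem_Ex.mpr ⟨h1, by omega⟩
  have hgL : ∀ v ∈ B, v ∈ LostF Fam sm x S (gp v).1 := by
    intro v hv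
    obtain ⟨_, h2, h3, _, _, _⟩ := hgp v hv
    exact mem_LostF.mpr ⟨h3, h2, (Finset.mem_filter.mp hv).2⟩
  have hfib : B.card = ∑ T ∈ Fam.Ex sm x, (B.filter (fun v => (gp v).1 = T)).card :=
    Finset.card_eq_sum_card_fiberwise hgEx
  have hfibL : ∀ T ∈ Fam.Ex sm x,
      (B.filter (fun v => (gp v).1 = T)).card ≤ (LostF Fam sm x S T).card := by
    intro T hT
    apply Finset.card_le_card
    intro v hv
    obtain ⟨hv1, hv2⟩ := Finset.mem_filter.mp hv
    exact hv2 ▸ hgL v hv1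
  obtain ⟨v₀, hv₀⟩ := hBne
  obtain ⟨hg1, hg2, hg3, hg4, hg5, hg6⟩ := hgp v₀ hv₀
  have hT₀Ex : (gp v₀).1 ∈ Fam.Ex sm x := hgEx v₀ hv₀
  have hT₀lt : (gp v₀).1.card < S.card := hIS.SM _ hg1 S hS hg2
  have hT₀sm : sm.card ≤ (gp v₀).1.card := sm_card_le hIS hg1
  set t₀ : ℕ := S.card - (gp v₀).1.card with ht₀def
  -- cardinality bookkeeping giving |hat S| ≤ t₀ + |B|
  have hViscard : (Fam.Vis S).ncard = VisF.card := Set.ncard_eq_toFinset_card _ _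
  have hsplit : (VisF.filter (fun v => v ∈ S)).card + B.card = VisF.card := by
    rw [hBdef]
    exact Finset.card_filter_add_card_filter_not (fun v => v ∈ S)
  have hLVS : (gp v₀).2.card ≤ VisF.card := hViscard ▸ hIS.LVS S hS (gp v₀).2 hg4
  set hatSF : Finset V := (Set.toFinite (Fam.hat S)).toFinset with hhatSFdef
  have hhatcard : (Fam.hat S).ncard = hatSF.card := Set.ncard_eq_toFinset_card _ _
  have hdisj : Disjoint hatSF (VisF.filter (fun v => v ∈ S)) := by
    rw [Finset.disjoint_left]
    intro v hv1 hv2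
    have hvhat : v ∈ Fam.hat S := (Set.Finite.mem_toFinset _).mp hv1
    have hvvis : v ∈ Fam.Vis S := (hmemVisF v).mp (Finset.mem_filter.mp hv2).1
    obtain ⟨⟨P, hP, hvP⟩, _⟩ := hvvis
    exact (mem_hat.mp hvhat).2 P hP.1 hP.2.1 hvP
  have hunion : hatSF.card + (VisF.filter (fun v => v ∈ S)).card ≤ S.card := by
    have hsub : hatSF ∪ VisF.filter (fun v => v ∈ S) ⊆ S := by
      intro v hv
      rcases Finset.mem_union.mp hv with h | h
      · exact hat_subset ((Set.Finite.mem_toFinset _).mp h)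
      · exact (Finset.mem_filter.mp h).2
    calc hatSF.card + (VisF.filter (fun v => v ∈ S)).card
        = (hatSF ∪ VisF.filter (fun v => v ∈ S)).card :=
          (Finset.card_union_of_disjoint hdisj).symm
      _ ≤ S.card := Finset.card_le_card hsub
  have hhat_le : hatSF.card ≤ t₀ + B.card := by omega
  -- the weighted sum bound
  have hpow0 : x + 1 - ISFamily.ex sm (gp v₀).1 = t₀ := by
    simp only [ISFamily.ex]
    omega
  have hf0 : 1 ≤ (B.filter (fun v => (gp v).1 = (gp v₀).1)).card :=
    Finset.card_pos.mpr ⟨v₀, Finset.mem_filter.mpr ⟨hv₀, rfl⟩⟩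
  have hpa : t₀ < 2 ^ t₀ := Nat.lt_two_pow_self (n := t₀)
  have step1 : ∑ T ∈ Fam.Ex sm x,
      2 ^ (x + 1 - ISFamily.ex sm T) * (B.filter (fun v => (gp v).1 = T)).card ≤
      ∑ T ∈ Fam.Ex sm x, 2 ^ (x + 1 - ISFamily.ex sm T) * (LostF Fam sm x S T).card :=
    Finset.sum_le_sum (fun T hT => Nat.mul_le_mul_left _ (hfibL T hT))
  have step3 : 2 * ∑ T ∈ (Fam.Ex sm x).erase (gp v₀).1, (B.filter (fun v => (gp v).1 = T)).card
      ≤ ∑ T ∈ (Fam.Ex sm x).erase (gp v₀).1,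
          2 ^ (x + 1 - ISFamily.ex sm T) * (B.filter (fun v => (gp v).1 = T)).card := by
    rw [Finset.mul_sum]
    apply Finset.sum_le_sum
    intro T hT
    have hTEx : T ∈ Fam.Ex sm x := Finset.mem_of_mem_erase hT
    have hexT : ISFamily.ex sm T ≤ x := by
      have := (mem_Ex.mp hTEx).2
      simp only [ISFamily.ex]
      omega
    have h2 : (2 : ℕ) ≤ 2 ^ (x + 1 - ISFamily.ex sm T) := by
      have : (2 : ℕ) ^ 1 ≤ 2 ^ (x + 1 - ISFamily.ex sm T) :=
        Nat.pow_le_pow_right (by norm_num) (by omega)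
      simpa using this
    exact Nat.mul_le_mul_right _ h2
  refine le_trans ?_ step1
  rw [hhatcard]
  set f₀ := (B.filter (fun v => (gp v).1 = (gp v₀).1)).card with hf₀def
  set s := ∑ T ∈ (Fam.Ex sm x).erase (gp v₀).1, (B.filter (fun v => (gp v).1 = T)).card
    with hsdef
  have hBsum : B.card = f₀ + s := by
    rw [hfib]
    exact (Finset.add_sum_erase _ _ hT₀Ex).symm
  have hmul : (t₀ + 1) * f₀ ≤ 2 ^ t₀ * f₀ := Nat.mul_le_mul_right _ hpa
  have h3 : t₀ ≤ t₀ * f₀ := Nat.le_mul_of_pos_right _ hf0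
  calc hatSF.card ≤ 2 ^ t₀ * f₀ + 2 * s := by nlinarith [hmul, hf0, h3, hhat_le, hBsum]
    _ ≤ 2 ^ t₀ * f₀ + ∑ T ∈ (Fam.Ex sm x).erase (gp v₀).1,
        2 ^ (x + 1 - ISFamily.ex sm T) * (B.filter (fun v => (gp v).1 = T)).card :=
      Nat.add_le_add_left step3 _
    _ = 2 ^ (x + 1 - ISFamily.ex sm (gp v₀).1) * f₀ + ∑ T ∈ (Fam.Ex sm x).erase (gp v₀).1,
        2 ^ (x + 1 - ISFamily.ex sm T) * (B.filter (fun v => (gp v).1 = T)).card := by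
      rw [hpow0]
    _ = ∑ T ∈ Fam.Ex sm x,
        2 ^ (x + 1 - ISFamily.ex sm T) * (B.filter (fun v => (gp v).1 = T)).card := by
      rw [hf₀def]
      exact Finset.add_sum_erase (Fam.Ex sm x)
        (fun T => 2 ^ (x + 1 - ISFamily.ex sm T) *
          (B.filter (fun v => (gp v).1 = T)).card) hT₀Ex

end ISMainAux

namespace ISMainAux

open ISFamily

variable {V : Type*} [DecidableEq V] [Fintype V]

set_option maxHeartbeats 1000000 in
/-- The doubling step: `M (x+1) ≤ 2 * M x`. -/
lemma M_succ {Fam : ISFamily V} {sm : Finset V} (hIS : Fam.IsIS sm) (x : ℕ) :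
    Fam.M sm (x + 1) ≤ 2 * Fam.M sm x := by
  classical
  have hsub : Fam.Ex sm x ⊆ Fam.Ex sm (x + 1) := by
    intro S hS
    obtain ⟨h1, h2⟩ := mem_Ex.mp hS
    exact mem_Ex.mpr ⟨h1, by omega⟩
  set N := Fam.Ex sm (x + 1) \ Fam.Ex sm x with hNdef
  have hNcard : ∀ S ∈ N, S ∈ Fam.F ∧ S.card = sm.card + x + 1 := by
    intro S hS
    obtain ⟨h1, h2⟩ := Finset.mem_sdiff.mp hS
    obtain ⟨h3, h4⟩ := mem_Ex.mp h1
    have h5 : ¬ (S.card - sm.card ≤ x) := fun h => h2 (mem_Ex.mpr ⟨h3, h⟩)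
    have h6 := sm_card_le hIS h3
    exact ⟨h3, by omega⟩
  have hNEx : ∀ S ∈ N, S ∈ Fam.Ex sm (x + 1) := fun S hS => (Finset.mem_sdiff.mp hS).1
  -- for S of excess exactly x+1, hatx (x+1) S = hat S
  have hhatN : ∀ S ∈ N, (Fam.hatx sm (x + 1) S).ncard = (Fam.hat S).ncard := by
    intro S hS
    obtain ⟨hSF, hSc⟩ := hNcard S hS
    congr 1
    apply Set.eq_of_subset_of_subset hatx_subset_hat
    intro v hv
    refine mem_hatx.mpr ⟨hv, ?_⟩
    rintro ⟨S', hS', hprec, hvS'⟩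
    obtain ⟨h1, h2⟩ := mem_Ex.mp hS'
    have h3 := hIS.SM S hSF S' h1 hprec
    have h4 := sm_card_le hIS h1
    omega
  have hexN : ∀ S ∈ N, x + 1 - ISFamily.ex sm S = 0 := by
    intro S hS
    obtain ⟨hSF, hc⟩ := hNcard S hS
    simp only [ISFamily.ex]
    omega
  have hMsplit : Fam.M sm (x + 1) = (∑ S ∈ N, (Fam.hat S).ncard)
      + ∑ S ∈ Fam.Ex sm x, 2 ^ (x + 1 - ISFamily.ex sm S) * (Fam.hatx sm (x + 1) S).ncard := by
    rw [ISFamily.M, ← Finset.sum_sdiff hsub, ← hNdef]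
    congr 1
    apply Finset.sum_congr rfl
    intro S hS
    rw [hexN S hS, hhatN S hS, pow_zero, one_mul]
  have hkey : ∑ S ∈ N, (Fam.hat S).ncard ≤
      ∑ S ∈ N, ∑ T ∈ Fam.Ex sm x, 2 ^ (x + 1 - ISFamily.ex sm T) * (LostF Fam sm x S T).card :=
    Finset.sum_le_sum (fun S hS => key_ineq hIS (hNcard S hS).1 (hNcard S hS).2)
  rw [Finset.sum_comm] at hkey
  -- per T : the union of losses plus the new hatx is inside the old hatx
  have hperT : ∀ T ∈ Fam.Ex sm x,
      (∑ S ∈ N, (LostF Fam sm x S T).card) + (Fam.hatx sm (x + 1) T).ncard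
        ≤ (Fam.hatx sm x T).ncard := by
    intro T hT
    obtain ⟨hTF, hTex⟩ := mem_Ex.mp hT
    have hpair : ∀ S₁ ∈ N, ∀ S₂ ∈ N, S₁ ≠ S₂ →
        Disjoint (LostF Fam sm x S₁ T) (LostF Fam sm x S₂ T) := by
      intro S₁ h₁ S₂ h₂ hne
      rw [Finset.disjoint_left]
      intro v hv₁ hv₂
      obtain ⟨ha1, ha2, ha3⟩ := mem_LostF.mp hv₁
      obtain ⟨hb1, hb2, hb3⟩ := mem_LostF.mp hv₂
      exact hne (excluder_unique hIS hTF ha1 (hNcard S₁ h₁).1 (hNcard S₁ h₁).2 ha2 ha3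
        (hNcard S₂ h₂).1 (hNcard S₂ h₂).2 hb2 hb3)
    have hbu : ∑ S ∈ N, (LostF Fam sm x S T).card
        = (N.biUnion (fun S => LostF Fam sm x S T)).card :=
      (Finset.card_biUnion hpair).symm
    have hsub1 : N.biUnion (fun S => LostF Fam sm x S T) ⊆ hatxF Fam sm x T := by
      intro v hv
      obtain ⟨S, hSN, hvS⟩ := Finset.mem_biUnion.mp hv
      exact mem_hatxF.mpr (mem_LostF.mp hvS).1
    have hsub2 : hatxF Fam sm (x + 1) T ⊆ hatxF Fam sm x T := by
      intro v hv
      exact mem_hatxF.mpr (hatx_anti (mem_hatxF.mp hv))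
    have hdisj : Disjoint (N.biUnion (fun S => LostF Fam sm x S T)) (hatxF Fam sm (x + 1) T) := by
      rw [Finset.disjoint_left]
      intro v hv₁ hv₂
      obtain ⟨S, hSN, hvS⟩ := Finset.mem_biUnion.mp hv₁
      obtain ⟨ha1, ha2, ha3⟩ := mem_LostF.mp hvS
      have hv3 := mem_hatxF.mp hv₂
      exact (mem_hatx.mp hv3).2 ⟨S, hNEx S hSN, ha2, ha3⟩
    have hun : (N.biUnion (fun S => LostF Fam sm x S T)).card + (hatxF Fam sm (x + 1) T).card
        ≤ (hatxF Fam sm x T).card := by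
      calc (N.biUnion (fun S => LostF Fam sm x S T)).card + (hatxF Fam sm (x + 1) T).card
          = ((N.biUnion (fun S => LostF Fam sm x S T)) ∪ hatxF Fam sm (x + 1) T).card :=
            (Finset.card_union_of_disjoint hdisj).symm
        _ ≤ (hatxF Fam sm x T).card :=
            Finset.card_le_card (Finset.union_subset hsub1 hsub2)
    rw [hbu, ncard_hatx, ncard_hatx]
    exact hun
  -- put everything together
  calc Fam.M sm (x + 1)
      = (∑ S ∈ N, (Fam.hat S).ncard)
        + ∑ T ∈ Fam.Ex sm x, 2 ^ (x + 1 - ISFamily.ex sm T) * (Fam.hatx sm (x + 1) T).ncard :=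
        hMsplit
    _ ≤ (∑ T ∈ Fam.Ex sm x, ∑ S ∈ N, 2 ^ (x + 1 - ISFamily.ex sm T) * (LostF Fam sm x S T).card)
        + ∑ T ∈ Fam.Ex sm x, 2 ^ (x + 1 - ISFamily.ex sm T) * (Fam.hatx sm (x + 1) T).ncard :=
        Nat.add_le_add_right hkey _
    _ = ∑ T ∈ Fam.Ex sm x, 2 ^ (x + 1 - ISFamily.ex sm T) *
          ((∑ S ∈ N, (LostF Fam sm x S T).card) + (Fam.hatx sm (x + 1) T).ncard) := by
        rw [← Finset.sum_add_distrib]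
        apply Finset.sum_congr rfl
        intro T hT
        rw [Nat.mul_add, Finset.mul_sum]
    _ ≤ ∑ T ∈ Fam.Ex sm x, 2 ^ (x + 1 - ISFamily.ex sm T) * (Fam.hatx sm x T).ncard :=
        Finset.sum_le_sum (fun T hT => Nat.mul_le_mul_left _ (hperT T hT))
    _ = 2 * Fam.M sm x := by
        rw [ISFamily.M, Finset.mul_sum]
        apply Finset.sum_congr rfl
        intro T hT
        have hexT : ISFamily.ex sm T ≤ x := (Finset.mem_filter.mp hT).2
        have hpow : x + 1 - ISFamily.ex sm T = (x - ISFamily.ex sm T) + 1 := by omega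
        rw [hpow, pow_succ, Nat.mul_comm (2 ^ (x - ISFamily.ex sm T)) 2, Nat.mul_assoc]

lemma Ex_zero {Fam : ISFamily V} {sm : Finset V} (hIS : Fam.IsIS sm) :
    Fam.Ex sm 0 = {sm} := by
  ext S
  rw [Finset.mem_singleton, mem_Ex]
  constructor
  · rintro ⟨hSF, hc⟩
    by_contra hne
    have h1 := hIS.SM sm hIS.sm_mem S hSF (hIS.SE S hSF hne)
    omega
  · rintro rfl
    exact ⟨hIS.sm_mem, by omega⟩

lemma M_zero {Fam : ISFamily V} {sm : Finset V} (hIS : Fam.IsIS sm) :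
    Fam.M sm 0 ≤ sm.card := by
  rw [ISFamily.M, Ex_zero hIS, Finset.sum_singleton]
  calc 2 ^ (0 - ISFamily.ex sm sm) * (Fam.hatx sm 0 sm).ncard
      = (Fam.hatx sm 0 sm).ncard := by simp [ISFamily.ex]
    _ ≤ (↑sm : Set V).ncard :=
        Set.ncard_le_ncard (subset_trans hatx_subset_hat hat_subset) (Set.toFinite _)
    _ = sm.card := Set.ncard_coe_finset sm

end ISMainAux

open ISFamily in
/-- `M(x) ≤ 2^x · |sm(F)|` for every `x ≥ 0`. -/
theorem main_level_bound {V : Type*} [DecidableEq V] [Fintype V]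
    (Fam : ISFamily V) (sm : Finset V) (hIS : Fam.IsIS sm) (x : ℕ) :
    Fam.M sm x ≤ 2 ^ x * sm.card := by
  induction x with
  | zero => simpa using ISMainAux.M_zero hIS
  | succ n ih =>
    calc Fam.M sm (n + 1) ≤ 2 * Fam.M sm n := ISMainAux.M_succ hIS n
      _ ≤ 2 * (2 ^ n * sm.card) := Nat.mul_le_mul_left _ ih
      _ = 2 ^ (n + 1) * sm.card := by ring
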